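/- Let P be a polytope with pyramidal width δ > 0 and f a convex C¹ function satisfying the Hölder error bound condition with parameters q > 1 and μ > 0 over P. Let x ∈ conv S for S ⊆ vertices of P, v^FW = argmin_{v∈P}⟨∇f(x), v⟩, and v^A = argmax_{v∈S}⟨∇f(x), v⟩. Then f(x) − f* ≤ (q/μ)^{1/(q−1)} · (⟨∇f(x), v^A − v^FW⟩/δ)^{q/(q−1)}. -/

import Mathlib

open Set Metric Filter Topology
open scoped RealInnerProductSpace

private lemma grad_ineq {n : ℕ} {f : EuclideanSpace ℝ (Fin n) → ℝ}
    {s : Set (EuclideanSpace ℝ (Fin n))} (hf : ConvexOn ℝ s f)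
    {x y : EuclideanSpace ℝ (Fin n)} (hx : x ∈ s) (hy : y ∈ s)
    {g : EuclideanSpace ℝ (Fin n)} (hg : HasGradientAt f g x) :
    f x + ⟪g, y - x⟫ ≤ f y := by
  set c : ℝ → EuclideanSpace ℝ (Fin n) := fun t => x + t • (y - x) with hc
  have hc0 : c 0 = x := by simp [hc]
  have hderiv : HasDerivAt (f ∘ c) ⟪g, y - x⟫ 0 := by
    have h1 : HasDerivAt c (y - x) 0 := by
      have h1' := ((hasDerivAt_id (0:ℝ)).smul_const (y - x)).const_add x
      rw [one_smul] at h1'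
      exact h1'
    have h2 := (hc0 ▸ hg.hasFDerivAt).comp_hasDerivAt 0 h1
    simpa [InnerProductSpace.toDual_apply_apply] using h2
  have hslope := hasDerivAt_iff_tendsto_slope.mp hderiv
  have hslope' : Filter.Tendsto (slope (f ∘ c) 0) (𝓝[>] (0:ℝ)) (𝓝 ⟪g, y - x⟫) :=
    hslope.mono_left (nhdsWithin_mono _ (fun t ht => ne_of_gt ht))
  have hev : ∀ᶠ t in 𝓝[>] (0:ℝ), slope (f ∘ c) 0 t ≤ f y - f x := by
    filter_upwards [Ioc_mem_nhdsGT one_pos] with t ht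
    have hct : f (c t) ≤ (1 - t) * f x + t * f y := by
      have hcteq : c t = (1 - t) • x + t • y := by
        simp only [hc]
        rw [smul_sub, sub_smul, one_smul]
        abel
      rw [hcteq]
      exact hf.2 hx hy (by linarith [ht.2]) ht.1.le (by ring)
    have : slope (f ∘ c) 0 t = (f (c t) - f x) / t := by
      rw [slope_def_field]
      simp [hc0]
    rw [this, div_le_iff₀ ht.1]
    nlinarith [ht.1]
  have := le_of_tendsto hslope' hev
  linarith

/-- geometric Hölder error bound: upper bound on the primal gap over a
polytope via the pyramidal width and the Hölder error bound condition. -/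
theorem geometric_heb {n : ℕ}
    (V : Finset (EuclideanSpace ℝ (Fin n))) (hV : V.Nonempty)
    (P : Set (EuclideanSpace ℝ (Fin n)))
    (hPdef : P = convexHull ℝ (V : Set (EuclideanSpace ℝ (Fin n))))
    (δ : ℝ) (hδ : 0 < δ)
    (hpw : ∀ ψ : EuclideanSpace ℝ (Fin n),
      ∀ S : Finset (EuclideanSpace ℝ (Fin n)), S ⊆ V →
      ∀ x' ∈ convexHull ℝ (S : Set (EuclideanSpace ℝ (Fin n))), ∀ y ∈ P, x' ≠ y →
      ∀ vFW ∈ P, (∀ w ∈ P, ⟪ψ, vFW⟫ ≤ ⟪ψ, w⟫) →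
      ∀ vA ∈ S, (∀ w ∈ S, ⟪ψ, w⟫ ≤ ⟪ψ, vA⟫) →
        δ * ⟪ψ, x' - y⟫ / ‖x' - y‖ ≤ ⟪ψ, vA - vFW⟫)
    (f : EuclideanSpace ℝ (Fin n) → ℝ)
    (f' : EuclideanSpace ℝ (Fin n) → EuclideanSpace ℝ (Fin n))
    (hf : ConvexOn ℝ P f)
    (hf' : ∀ x ∈ P, HasGradientAt f (f' x) x)
    (q μ : ℝ) (hq : 1 < q) (hμ : 0 < μ)
    (xstar : EuclideanSpace ℝ (Fin n)) (hxstar : xstar ∈ P)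
    (hmin : IsMinOn f P xstar)
    (heb : ∀ x ∈ P,
      (infDist x {y | y ∈ P ∧ IsMinOn f P y}) ^ q ≤ (q / μ) * (f x - f xstar))
    (S : Finset (EuclideanSpace ℝ (Fin n))) (hS : S ⊆ V)
    (x : EuclideanSpace ℝ (Fin n))
    (hxS : x ∈ convexHull ℝ (S : Set (EuclideanSpace ℝ (Fin n))))
    (vFW : EuclideanSpace ℝ (Fin n)) (hvFW : vFW ∈ P)
    (hvFWmin : ∀ w ∈ P, ⟪f' x, vFW⟫ ≤ ⟪f' x, w⟫)
    (vA : EuclideanSpace ℝ (Fin n)) (hvA : vA ∈ S)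
    (hvAmax : ∀ w ∈ S, ⟪f' x, w⟫ ≤ ⟪f' x, vA⟫) :
    x ∈ P →
      f x - f xstar ≤
        (q / μ) ^ (1 / (q - 1)) * (⟪f' x, vA - vFW⟫ / δ) ^ (q / (q - 1)) := by
  intro hxP
  set Xs := {y | y ∈ P ∧ IsMinOn f P y} with hXs
  set g := ⟪f' x, vA - vFW⟫ with hgdef
  have hvAP : vA ∈ P := by rw [hPdef]; exact subset_convexHull ℝ _ (hS hvA)
  have hg0 : 0 ≤ g := by
    rw [hgdef, inner_sub_right]
    have := hvFWmin vA hvAP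
    linarith
  have hq0 : 0 < q := by linarith
  have hq1 : 0 < q - 1 := by linarith
  have hqμ : 0 < q / μ := div_pos hq0 hμ
  have hrhs0 : 0 ≤ (q / μ) ^ (1 / (q - 1)) * (g / δ) ^ (q / (q - 1)) :=
    mul_nonneg (Real.rpow_nonneg hqμ.le _) (Real.rpow_nonneg (div_nonneg hg0 hδ.le) _)
  set h := f x - f xstar with hh
  have hh0 : 0 ≤ h := by
    have := isMinOn_iff.mp hmin x hxP
    rw [hh]; linarith
  rcases eq_or_lt_of_le hh0 with heq | hpos
  · rw [← heq]; exact hrhs0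
  -- nearest minimizer
  have hPcomp : IsCompact P := by
    rw [hPdef]; exact V.finite_toSet.isCompact_convexHull ℝ
  have hfc : ContinuousOn f P := fun z hz =>
    ((hf' z hz).hasFDerivAt.continuousAt).continuousWithinAt
  have hXseq : Xs = P ∩ f ⁻¹' (Iic (f xstar)) := by
    ext z
    constructor
    · rintro ⟨hzP, hzmin⟩; exact ⟨hzP, isMinOn_iff.mp hzmin xstar hxstar⟩
    · rintro ⟨hzP, hzle⟩
      exact ⟨hzP, isMinOn_iff.mpr fun w hw => le_trans hzle (isMinOn_iff.mp hmin w hw)⟩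
  have hXsclosed : IsClosed Xs := by
    rw [hXseq]
    exact hfc.preimage_isClosed_of_isClosed hPcomp.isClosed isClosed_Iic
  have hXscomp : IsCompact Xs :=
    hPcomp.of_isClosed_subset hXsclosed (by rw [hXseq]; exact inter_subset_left)
  obtain ⟨y, hyXs, hyd⟩ := hXscomp.exists_infDist_eq_dist ⟨xstar, hxstar, hmin⟩ x
  have hyP : y ∈ P := hyXs.1
  have hfy : f y = f xstar :=
    le_antisymm (isMinOn_iff.mp hyXs.2 xstar hxstar) (isMinOn_iff.mp hmin y hyP)
  have hxy : x ≠ y := by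
    intro hxyeq
    have : h = 0 := by rw [hh, hxyeq, hfy]; ring
    linarith
  set d := dist x y with hd
  have hd0 : 0 < d := dist_pos.mpr hxy
  -- gradient inequality
  have hgi := grad_ineq hf hxP hyP (hf' x hxP)
  have hkey : h ≤ ⟪f' x, x - y⟫ := by
    have h1 : ⟪f' x, x - y⟫ = -⟪f' x, y - x⟫ := by
      rw [← inner_neg_right]; congr 1; abel
    rw [h1, hh, ← hfy]; linarith
  -- pyramidal width
  have hpw' := hpw (f' x) S hS x hxS y hyP hxy vFW hvFW hvFWmin vA hvA hvAmax
  have hnorm : ‖x - y‖ = d := by rw [hd, dist_eq_norm]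
  rw [hnorm, ← hgdef] at hpw'
  have h2 : δ * h / d ≤ g := le_trans (by gcongr) hpw'
  have h3 : h ≤ g * d / δ := by
    rw [div_le_iff₀ hd0] at h2
    rw [le_div_iff₀ hδ]
    linarith
  have hgpos : 0 < g := by
    rcases hg0.lt_or_eq with hlt | heq0
    · exact hlt
    · exfalso
      rw [← heq0] at h3
      simp at h3
      linarith
  -- Hölder error bound
  have h4 := heb x hxP
  rw [← hh, hyd] at h4
  have hAh : 0 < (q / μ) * h := mul_pos hqμ hpos
  have hd_le : d ≤ ((q / μ) * h) ^ (1 / q) := by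
    calc d = (d ^ q) ^ (1 / q) := by
          rw [← Real.rpow_mul hd0.le, mul_one_div_cancel hq0.ne', Real.rpow_one]
      _ ≤ ((q / μ) * h) ^ (1 / q) :=
          Real.rpow_le_rpow (Real.rpow_nonneg hd0.le _) h4 (by positivity)
  have h5 : h ≤ (g / δ) * ((q / μ) * h) ^ (1 / q) := by
    calc h ≤ g * d / δ := h3
      _ = (g / δ) * d := by ring
      _ ≤ (g / δ) * ((q / μ) * h) ^ (1 / q) := by
          exact mul_le_mul_of_nonneg_left hd_le (div_nonneg hg0 hδ.le)
  have hpq : 0 < h ^ (1 / q) := Real.rpow_pos_of_pos hpos _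
  have h6 : h ^ (1 - 1 / q) ≤ (g / δ) * (q / μ) ^ (1 / q) := by
    rw [← mul_le_mul_iff_of_pos_right hpq]
    calc h ^ (1 - 1 / q) * h ^ (1 / q) = h := by
          rw [← Real.rpow_add hpos]; norm_num
      _ ≤ (g / δ) * ((q / μ) * h) ^ (1 / q) := h5
      _ = (g / δ) * ((q / μ) ^ (1 / q) * h ^ (1 / q)) := by
          rw [Real.mul_rpow hqμ.le hpos.le]
      _ = (g / δ) * (q / μ) ^ (1 / q) * h ^ (1 / q) := by ring
  have hr : 0 < q / (q - 1) := div_pos hq0 hq1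
  have h7 := Real.rpow_le_rpow (Real.rpow_nonneg hpos.le _) h6 hr.le
  have hleft : (h ^ (1 - 1 / q)) ^ (q / (q - 1)) = h := by
    rw [← Real.rpow_mul hpos.le]
    have : (1 - 1 / q) * (q / (q - 1)) = 1 := by field_simp
    rw [this, Real.rpow_one]
  have hright : ((g / δ) * (q / μ) ^ (1 / q)) ^ (q / (q - 1))
      = (q / μ) ^ (1 / (q - 1)) * (g / δ) ^ (q / (q - 1)) := by
    rw [Real.mul_rpow (div_nonneg hg0 hδ.le) (Real.rpow_nonneg hqμ.le _),
      ← Real.rpow_mul hqμ.le]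
    have : (1 / q) * (q / (q - 1)) = 1 / (q - 1) := by field_simp
    rw [this]; ring
  rw [hleft, hright] at h7
  exact h7
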